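/- Every weakly Lindelöf topological group G is simply sm-factorizable. -/

import Mathlib

open Topology TopologicalSpace Pointwise Function Set

def IsCozero {X : Type*} [TopologicalSpace X] (U : Set X) : Prop :=
  ∃ f : X → ℝ, Continuous f ∧ U = f ⁻¹' {x : ℝ | x ≠ 0}

/-- A topological group is simply sm-factorizable if every cozero set is saturated with
respect to some continuous surjective homomorphism onto a separable metrizable topological group. -/
def SimplySMFactorizable (G : Type*) [Group G] [TopologicalSpace G] : Prop :=
  ∀ U : Set G, IsCozero U →
    ∃ (H : Type) (gH : Group H) (tH : TopologicalSpace H),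
      letI := gH
      letI := tH
      IsTopologicalGroup H ∧ SeparableSpace H ∧ MetrizableSpace H ∧
        ∃ π : G →* H, Continuous π ∧ Surjective π ∧ ⇑π ⁻¹' (⇑π '' U) = U

/-- A space is weakly Lindelöf if every open cover has a countable subfamily with dense union. -/
def WeaklyLindelof (X : Type*) [TopologicalSpace X] : Prop :=
  ∀ 𝒰 : Set (Set X), (∀ U ∈ 𝒰, IsOpen U) → ⋃₀ 𝒰 = Set.univ →
    ∃ 𝒱 ⊆ 𝒰, 𝒱.Countable ∧ Dense (⋃₀ 𝒱)

set_option linter.unusedSectionVars false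
set_option maxHeartbeats 1000000

section Helpers
variable {G : Type*} [Group G] [TopologicalSpace G] [IsTopologicalGroup G]

def SNbhd (V : Set G) : Prop := IsOpen V ∧ (1 : G) ∈ V ∧ V⁻¹ = V
lemma sNbhd_univ : SNbhd (univ : Set G) := ⟨isOpen_univ, mem_univ _, by simp⟩
lemma SNbhd.inter {V W : Set G} (hV : SNbhd V) (hW : SNbhd W) : SNbhd (V ∩ W) :=
  ⟨hV.1.inter hW.1, ⟨hV.2.1, hW.2.1⟩, by rw [Set.inter_inv, hV.2.2, hW.2.2]⟩
lemma SNbhd.inv_mem {V : Set G} (hV : SNbhd V) {x : G} (hx : x ∈ V) : x⁻¹ ∈ V := by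
  rw [← hV.2.2]; simpa using hx
lemma SNbhd.mul_inv {V W : Set G} (hV : SNbhd V) (hW : SNbhd W) : (V * W)⁻¹ = W * V := by
  rw [mul_inv_rev, hV.2.2, hW.2.2]
lemma exists_sqrt {S : Set G} (hS : IsOpen S) (h1 : (1 : G) ∈ S) :
    ∃ V : Set G, SNbhd V ∧ V * V ⊆ S := by
  obtain ⟨V, hVo, hV1, hVS⟩ := exists_open_nhds_one_mul_subset (hS.mem_nhds h1)
  refine ⟨V ∩ V⁻¹, ⟨hVo.inter hVo.inv, ⟨hV1, by simpa using hV1⟩, ?_⟩, ?_⟩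
  · rw [Set.inter_inv, inv_inv, Set.inter_comm]
  · exact (Set.mul_subset_mul inter_subset_left inter_subset_left).trans hVS
lemma subset_sq {V : Set G} (hV : SNbhd V) : V ⊆ V * V := fun x hx => by
  simpa using Set.mul_mem_mul hx hV.2.1
lemma closure_subset_mul {V : Set G} (hV : SNbhd V) (A : Set G) : closure A ⊆ A * V := by
  intro x hx
  have hxV : x ∈ x • V := ⟨1, hV.2.1, mul_one x⟩
  obtain ⟨a, haV, haA⟩ := mem_closure_iff.1 hx (x • V) (hV.1.smul x) hxV
  obtain ⟨v, hv, hva⟩ := haV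
  have : x = a * v⁻¹ := by rw [← hva]; simp [smul_eq_mul, mul_assoc]
  rw [this]
  exact Set.mul_mem_mul haA (hV.inv_mem hv)
lemma wl_extract (hWL : WeaklyLindelof G) (P : Set G → Prop)
    (h : ∀ c : G, ∃ W, c ∈ W ∧ IsOpen W ∧ P W) :
    ∃ S : Set (Set G), S.Countable ∧ (∀ W ∈ S, P W) ∧ Dense (⋃₀ S) := by
  obtain ⟨𝒱, h𝒱sub, h𝒱cnt, h𝒱dense⟩ := hWL {W | IsOpen W ∧ P W} (fun U hU => hU.1)
    (by
      apply Set.eq_univ_of_forall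
      intro c
      obtain ⟨W, h1, h2, h3⟩ := h c
      exact ⟨W, ⟨h2, h3⟩, h1⟩)
  exact ⟨𝒱, h𝒱cnt, fun W hW => (h𝒱sub hW).2, h𝒱dense⟩

variable (f : G → ℝ)

lemma pieces (hWL : WeaklyLindelof G) (hf : Continuous f) {ε : ℝ} (hε : 0 < ε) :
    ∃ S : Set (Set G), S.Countable ∧ Dense (⋃₀ S) ∧
      ∀ W ∈ S, ∃ V : Set G, SNbhd V ∧ ∀ x ∈ W, ∀ g ∈ V, |f (x * g) - f x| ≤ ε := by
  have hcover : ∀ c : G, ∃ W, c ∈ W ∧ IsOpen W ∧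
      ∃ V : Set G, SNbhd V ∧ ∀ x ∈ W, ∀ g ∈ V, |f (x * g) - f x| ≤ ε := ?_
  case _ =>
    obtain ⟨S, hcnt, hP, hdense⟩ := wl_extract hWL _ hcover
    exact ⟨S, hcnt, hdense, hP⟩
  intro c
  have hO : IsOpen (f ⁻¹' Metric.ball (f c) (ε / 2)) := hf.isOpen_preimage _ Metric.isOpen_ball
  have hcO : c ∈ f ⁻¹' Metric.ball (f c) (ε / 2) := by
    simp [Metric.mem_ball, hε, half_pos hε]
  have h1 : (1 : G) ∈ c⁻¹ • (f ⁻¹' Metric.ball (f c) (ε / 2)) :=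
    ⟨c, hcO, by simp [smul_eq_mul]⟩
  obtain ⟨V, hV, hVsq⟩ := exists_sqrt (hO.smul c⁻¹) h1
  refine ⟨c • V, ⟨1, hV.2.1, mul_one c⟩, hV.1.smul c, V, hV, ?_⟩
  rintro x ⟨v, hv, rfl⟩ g hg
  have hmem : ∀ w ∈ V * V, f (c * w) ∈ Metric.ball (f c) (ε / 2) := by
    intro w hw
    have := hVsq hw
    obtain ⟨y, hy, hyw⟩ := this
    have : c * w = y := by rw [← hyw]; simp [smul_eq_mul, mul_assoc]
    rw [this]; exact hy
  have h1' : f ((c : G) • v * g) ∈ Metric.ball (f c) (ε / 2) := by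
    have : (c : G) • v * g = c * (v * g) := by simp [smul_eq_mul, mul_assoc]
    rw [this]; exact hmem _ (Set.mul_mem_mul hv hg)
  have h2' : f ((c : G) • v) ∈ Metric.ball (f c) (ε / 2) := by
    have : (c : G) • v = c * v := by simp [smul_eq_mul]
    rw [this]; exact hmem _ (subset_sq hV hv)
  rw [Metric.mem_ball, Real.dist_eq] at h1' h2'
  calc |f ((c : G) • v * g) - f ((c : G) • v)|
      ≤ |f ((c : G) • v * g) - f c| + |f c - f ((c : G) • v)| := abs_sub_le _ _ _
    _ ≤ ε / 2 + ε / 2 := by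
        rw [abs_sub_comm (f c)]
        exact add_le_add h1'.le h2'.le
    _ = ε := by ring


/-- ω-narrowness from weak Lindelöfness. -/
lemma narrow (hWL : WeaklyLindelof G) {V : Set G} (hV : SNbhd V) :
    ∃ C : Set G, C.Countable ∧ ∀ x : G, ∃ c ∈ C, c⁻¹ * x ∈ V * V := by
  obtain ⟨S, hcnt, hP, hdense⟩ := wl_extract hWL (fun W => ∃ c : G, W = c • V)
    (fun c => ⟨c • V, ⟨1, hV.2.1, mul_one c⟩, hV.1.smul c, c, rfl⟩)
  classical
  refine ⟨(fun W => if h : ∃ c : G, W = c • V then h.choose else 1) '' S,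
    hcnt.image _, fun x => ?_⟩
  have hx : x ∈ ⋃₀ S * V := closure_subset_mul hV _ (hdense.closure_eq ▸ mem_univ x :)
  obtain ⟨a, haD, v, hv, hav⟩ := hx
  obtain ⟨W, hWS, haW⟩ := haD
  have hc : ∃ c : G, W = c • V := hP W hWS
  refine ⟨hc.choose, ⟨W, hWS, by simp only [dif_pos hc]⟩, ?_⟩
  rw [hc.choose_spec] at haW
  obtain ⟨v', hv', hva⟩ := haW
  have : hc.choose⁻¹ * x = v' * v := by
    rw [← hav, ← hva]; simp [smul_eq_mul, mul_assoc]
  rw [this]; exact Set.mul_mem_mul hv' hv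

/-- ω-balancedness. -/
lemma balanced (hWL : WeaklyLindelof G) {V : Set G} (hV : SNbhd V) :
    ∃ B : Set (Set G), B.Countable ∧ (∀ W ∈ B, SNbhd W) ∧
      ∀ g : G, ∃ W ∈ B, ∀ n ∈ W, g * n * g⁻¹ ∈ V := by
  classical
  obtain ⟨W₀, hW₀, hW₀V⟩ := exists_sqrt hV.1 hV.2.1
  obtain ⟨W₁, hW₁, hW₁W₀⟩ := exists_sqrt hW₀.1 hW₀.2.1
  obtain ⟨W₂, hW₂, hW₂W₁⟩ := exists_sqrt hW₁.1 hW₁.2.1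
  -- quintuple products of W₂ land in V
  have hkey : ∀ a b x c d : G, a ∈ W₂ → b ∈ W₂ → x ∈ W₂ → c ∈ W₂ → d ∈ W₂ →
      a * b * x * c * d ∈ V := by
    intro a b x c d ha hb hx hc hd
    have h1 : a * b ∈ W₁ := hW₂W₁ (Set.mul_mem_mul ha hb)
    have h2 : x * c ∈ W₁ := hW₂W₁ (Set.mul_mem_mul hx hc)
    have h3 : a * b * (x * c) ∈ W₀ := hW₁W₀ (Set.mul_mem_mul h1 h2)
    have h4 : d ∈ W₀ := subset_sq hW₂ hd |> hW₂W₁ |> (subset_sq hW₁ · ) |> hW₁W₀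
    have := hW₀V (Set.mul_mem_mul h3 h4)
    simpa [mul_assoc] using this
  obtain ⟨C, hCcnt, hC⟩ := narrow hWL hW₂
  have hWc : ∀ c : G, ∃ Wc : Set G, SNbhd Wc ∧ Wc ⊆ W₂ ∧ ∀ n ∈ Wc, c⁻¹ * n * c ∈ W₂ := by
    intro c
    have hconj : Continuous fun x : G => c⁻¹ * x * c := by continuity
    have hopen : IsOpen ((fun x : G => c⁻¹ * x * c) ⁻¹' W₂ ∩ W₂) :=
      (hconj.isOpen_preimage _ hW₂.1).inter hW₂.1
    have h1 : (1 : G) ∈ (fun x : G => c⁻¹ * x * c) ⁻¹' W₂ ∩ W₂ :=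
      ⟨by simpa using hW₂.2.1, hW₂.2.1⟩
    obtain ⟨Wc, hWcS, hWcsq⟩ := exists_sqrt hopen h1
    have hsub := (subset_sq hWcS).trans hWcsq
    exact ⟨Wc, hWcS, fun n hn => (hsub hn).2, fun n hn => (hsub hn).1⟩
  refine ⟨(fun c => (hWc c).choose) '' C, hCcnt.image _,
    (by rintro W ⟨c, _, rfl⟩; exact (hWc c).choose_spec.1), fun g => ?_⟩
  obtain ⟨c, hcC, hcg⟩ := hC g⁻¹
  refine ⟨(hWc c).choose, ⟨c, hcC, rfl⟩, fun n hn => ?_⟩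
  obtain ⟨p, hp, q, hq, hpq⟩ := hcg
  -- c⁻¹ * g⁻¹ = p * q, so g = (p*q)⁻¹ * c⁻¹ = q⁻¹ * p⁻¹ * c⁻¹
  have hpq' : p * q = c⁻¹ * g⁻¹ := hpq
  have hg : g = q⁻¹ * (p⁻¹ * c⁻¹) := by
    have : g⁻¹ = c * (p * q) := by rw [hpq']; group
    calc g = (g⁻¹)⁻¹ := by group
      _ = (c * (p * q))⁻¹ := by rw [this]
      _ = q⁻¹ * (p⁻¹ * c⁻¹) := by group
  obtain ⟨hWcS, hWcsub, hWcconj⟩ := (hWc c).choose_spec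
  have hn2 : c⁻¹ * n * c ∈ W₂ := hWcconj n hn
  have : g * n * g⁻¹ = q⁻¹ * p⁻¹ * (c⁻¹ * n * c) * p * q := by rw [hg]; group
  rw [this]
  exact hkey _ _ _ _ _ (hW₂.inv_mem hq) (hW₂.inv_mem hp) hn2 hp hq

end Helpers

section BuildN
variable {G : Type*} [Group G] [TopologicalSpace G] [IsTopologicalGroup G]

lemma build_N (hWL : WeaklyLindelof G) (base : Set (Set G)) (hbc : base.Countable)
    (hb : ∀ V ∈ base, SNbhd V) :
    ∃ 𝒩 : Set (Set G), 𝒩.Countable ∧ base ⊆ 𝒩 ∧ univ ∈ 𝒩 ∧ (∀ V ∈ 𝒩, SNbhd V) ∧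
      (∀ V ∈ 𝒩, ∃ W ∈ 𝒩, W * W ⊆ V) ∧
      (∀ V ∈ 𝒩, ∀ W ∈ 𝒩, V ∩ W ∈ 𝒩) ∧
      (∀ V ∈ 𝒩, ∀ g : G, ∃ W ∈ 𝒩, ∀ n ∈ W, g * n * g⁻¹ ∈ V) := by
  classical
  set sq : Set G → Set G :=
    fun V => if h : SNbhd V then (exists_sqrt h.1 h.2.1).choose else univ with hsq_def
  set bl : Set G → Set (Set G) :=
    fun V => if h : SNbhd V then (balanced hWL h).choose else {univ} with hbl_def
  have hsq_nbhd : ∀ V : Set G, SNbhd (sq V) := by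
    intro V
    by_cases h : SNbhd V
    · simp only [hsq_def, dif_pos h]; exact (exists_sqrt h.1 h.2.1).choose_spec.1
    · simp only [hsq_def, dif_neg h]; exact sNbhd_univ
  have hsq_sq : ∀ V : Set G, SNbhd V → sq V * sq V ⊆ V := by
    intro V h
    simp only [hsq_def, dif_pos h]
    exact (exists_sqrt h.1 h.2.1).choose_spec.2
  have hbl_cnt : ∀ V : Set G, (bl V).Countable := by
    intro V
    by_cases h : SNbhd V
    · simp only [hbl_def, dif_pos h]; exact (balanced hWL h).choose_spec.1
    · simp only [hbl_def, dif_neg h]; exact countable_singleton _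
  have hbl_nbhd : ∀ V : Set G, ∀ W ∈ bl V, SNbhd W := by
    intro V W hW
    by_cases h : SNbhd V
    · simp only [hbl_def, dif_pos h] at hW; exact (balanced hWL h).choose_spec.2.1 W hW
    · simp only [hbl_def, dif_neg h, mem_singleton_iff] at hW; rw [hW]; exact sNbhd_univ
  have hbl_conj : ∀ V : Set G, SNbhd V → ∀ g : G, ∃ W ∈ bl V, ∀ n ∈ W, g * n * g⁻¹ ∈ V := by
    intro V h g
    simp only [hbl_def, dif_pos h]
    exact (balanced hWL h).choose_spec.2.2 g
  set F : Set (Set G) → Set (Set G) :=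
    fun A => A ∪ (sq '' A) ∪ (⋃ V ∈ A, bl V) ∪ Set.image2 (· ∩ ·) A A ∪ {univ} with hF_def
  have hF_sub : ∀ A : Set (Set G), A ⊆ F A := by
    intro A
    rw [hF_def]
    exact fun x hx => Or.inl (Or.inl (Or.inl (Or.inl hx)))
  have hF_cnt : ∀ A : Set (Set G), A.Countable → (F A).Countable := by
    intro A hA
    rw [hF_def]
    refine (((((hA.union (hA.image _)).union ?_).union ?_)).union (countable_singleton _))
    · exact hA.biUnion fun V _ => hbl_cnt V
    · exact hA.image2 hA _
  have hF_nbhd : ∀ A : Set (Set G), (∀ V ∈ A, SNbhd V) → ∀ V ∈ F A, SNbhd V := by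
    intro A hA V hV
    rw [hF_def] at hV
    rcases hV with ((((h | h) | h) | h) | h)
    · exact hA V h
    · obtain ⟨W, _, rfl⟩ := h; exact hsq_nbhd W
    · simp only [mem_iUnion] at h; obtain ⟨W, _, hVW⟩ := h; exact hbl_nbhd W V hVW
    · obtain ⟨W1, h1, W2, h2, rfl⟩ := h; exact (hA W1 h1).inter (hA W2 h2)
    · rw [mem_singleton_iff] at h; rw [h]; exact sNbhd_univ
  set ch : ℕ → Set (Set G) := fun n => F^[n] (base ∪ {univ}) with hch_def
  have hch_succ : ∀ n, ch (n + 1) = F (ch n) := by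
    intro n; rw [hch_def]; simp only; rw [Function.iterate_succ_apply']
  have hch_mono : ∀ m n, m ≤ n → ch m ⊆ ch n := by
    intro m n hmn
    induction n with
    | zero => rw [Nat.le_zero] at hmn; rw [hmn]
    | succ k ih =>
      rcases Nat.lt_or_ge m (k+1) with h | h
      · exact (ih (Nat.lt_succ_iff.1 h)).trans (by rw [hch_succ]; exact hF_sub _)
      · have : m = k + 1 := le_antisymm hmn h
        rw [this]
  have hch_cnt : ∀ n, (ch n).Countable := by
    intro n
    induction n with
    | zero => exact hbc.union (countable_singleton _)
    | succ k ih => rw [hch_succ]; exact hF_cnt _ ih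
  have hch_nbhd : ∀ n, ∀ V ∈ ch n, SNbhd V := by
    intro n
    induction n with
    | zero =>
      rintro V (h | h)
      · exact hb V h
      · rw [mem_singleton_iff] at h; rw [h]; exact sNbhd_univ
    | succ k ih => rw [hch_succ]; exact hF_nbhd _ ih
  refine ⟨⋃ n, ch n, countable_iUnion hch_cnt, ?_, ?_, ?_, ?_, ?_, ?_⟩
  · exact subset_trans (subset_union_left) (subset_iUnion ch 0)
  · exact mem_iUnion.2 ⟨0, Or.inr rfl⟩
  · intro V hV
    obtain ⟨n, hn⟩ := mem_iUnion.1 hV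
    exact hch_nbhd n V hn
  · intro V hV
    obtain ⟨n, hn⟩ := mem_iUnion.1 hV
    have hVn : SNbhd V := hch_nbhd n V hn
    refine ⟨sq V, mem_iUnion.2 ⟨n + 1, ?_⟩, hsq_sq V hVn⟩
    rw [hch_succ, hF_def]
    exact Or.inl (Or.inl (Or.inl (Or.inr ⟨V, hn, rfl⟩)))
  · intro V hV W hW
    obtain ⟨n, hn⟩ := mem_iUnion.1 hV
    obtain ⟨m, hm⟩ := mem_iUnion.1 hW
    refine mem_iUnion.2 ⟨max n m + 1, ?_⟩
    rw [hch_succ, hF_def]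
    refine Or.inl (Or.inr ?_)
    exact ⟨V, hch_mono n _ (le_max_left _ _) hn, W, hch_mono m _ (le_max_right _ _) hm, rfl⟩
  · intro V hV g
    obtain ⟨n, hn⟩ := mem_iUnion.1 hV
    obtain ⟨W, hWbl, hWconj⟩ := hbl_conj V (hch_nbhd n V hn) g
    refine ⟨W, mem_iUnion.2 ⟨n + 1, ?_⟩, hWconj⟩
    rw [hch_succ, hF_def]
    refine Or.inl (Or.inl (Or.inr ?_))
    simp only [mem_iUnion]
    exact ⟨V, hn, hWbl⟩
end BuildN

/-- Every weakly Lindelöf topological group is simply sm-factorizable. -/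
theorem statement2 (G : Type*) [Group G] [TopologicalSpace G] [IsTopologicalGroup G]
    (hWL : WeaklyLindelof G) : SimplySMFactorizable G := by
  classical
  intro U hU
  obtain ⟨f, hf, rfl⟩ := hU
  -- countable dense "piece" systems at every scale
  have hS : ∀ k : ℕ, ∃ S : Set (Set G), S.Countable ∧ Dense (⋃₀ S) ∧
      ∀ W ∈ S, ∃ V : Set G, SNbhd V ∧ ∀ x ∈ W, ∀ g ∈ V, |f (x * g) - f x| ≤ 1 / (k + 1) :=
    fun k => pieces f hWL hf (by positivity)
  choose S hScnt hSdense hSV using hS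
  -- selection of a controlling neighborhood for every piece
  set Vsel : ℕ → Set G → Set G := fun k W =>
    if h : ∃ V : Set G, SNbhd V ∧ ∀ x ∈ W, ∀ g ∈ V, |f (x * g) - f x| ≤ 1 / (k + 1)
    then h.choose else univ with hVsel_def
  have hVsel_nbhd : ∀ k W, SNbhd (Vsel k W) := by
    intro k W
    by_cases h : ∃ V : Set G, SNbhd V ∧ ∀ x ∈ W, ∀ g ∈ V, |f (x * g) - f x| ≤ 1 / (k + 1)
    · simp only [hVsel_def, dif_pos h]; exact h.choose_spec.1
    · simp only [hVsel_def, dif_neg h]; exact sNbhd_univ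
  have hVsel_prop : ∀ k : ℕ, ∀ W ∈ S k, ∀ x ∈ W, ∀ g ∈ Vsel k W,
      |f (x * g) - f x| ≤ 1 / (k + 1) := by
    intro k W hW
    have h : ∃ V : Set G, SNbhd V ∧ ∀ x ∈ W, ∀ g ∈ V, |f (x * g) - f x| ≤ 1 / (k + 1) :=
      hSV k W hW
    simp only [hVsel_def, dif_pos h]
    exact h.choose_spec.2
  -- the countable closed system of symmetric neighborhoods
  obtain ⟨𝒩, h𝒩cnt, h𝒩base, h𝒩univ, h𝒩nbhd, h𝒩sq, h𝒩inter, h𝒩conj⟩ :=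
    build_N hWL (⋃ k : ℕ, Vsel k '' S k)
      (countable_iUnion fun k => (hScnt k).image _)
      (by rintro V ⟨A, ⟨k, rfl⟩, ⟨W, _, rfl⟩⟩; exact hVsel_nbhd k W)
  -- the normal subgroup N = ⋂ 𝒩
  have hNmul : ∀ a ∈ ⋂₀ 𝒩, ∀ b ∈ ⋂₀ 𝒩, a * b ∈ ⋂₀ 𝒩 := by
    intro a ha b hb V hV
    obtain ⟨W, hW𝒩, hWsq⟩ := h𝒩sq V hV
    exact hWsq (Set.mul_mem_mul (ha W hW𝒩) (hb W hW𝒩))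
  set N : Subgroup G :=
    { carrier := ⋂₀ 𝒩
      one_mem' := fun V hV => (h𝒩nbhd V hV).2.1
      mul_mem' := fun {a b} ha hb => hNmul a ha b hb
      inv_mem' := fun {a} ha V hV => (h𝒩nbhd V hV).inv_mem (ha V hV) } with hN_def
  haveI hNnormal : N.Normal := by
    constructor
    intro n hn g V hV
    obtain ⟨W, hW𝒩, hWconj⟩ := h𝒩conj V hV g
    exact hWconj n (hn W hW𝒩)
  have hNsub : ∀ V ∈ 𝒩, (N : Set G) ⊆ V := fun V hV x hx => hx V hV
  -- f is constant along right translations by elements of N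
  have hper : ∀ n ∈ N, ∀ x : G, f (x * n) = f x := by
    intro n hn x
    have hbound : ∀ k : ℕ, |f (x * n) - f x| ≤ 1 / (k + 1) := by
      intro k
      have hgV : ∀ W ∈ S k, n ∈ Vsel k W := by
        intro W hW
        apply hNsub (Vsel k W) _ hn
        exact h𝒩base (mem_iUnion.2 ⟨k, mem_image_of_mem _ hW⟩)
      have hclosed : IsClosed {y : G | |f (y * n) - f y| ≤ 1 / (k + 1)} := by
        have hcont : Continuous fun y : G => |f (y * n) - f y| := by
          apply Continuous.abs
          exact (hf.comp (continuous_mul_right n)).sub hf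
        exact isClosed_le hcont continuous_const
      have hsubset : ⋃₀ S k ⊆ {y : G | |f (y * n) - f y| ≤ 1 / (k + 1)} := by
        rintro y ⟨W, hW, hyW⟩
        exact hVsel_prop k W hW y hyW n (hgV W hW)
      have : closure (⋃₀ S k) ⊆ {y : G | |f (y * n) - f y| ≤ 1 / (k + 1)} :=
        hclosed.closure_subset_iff.2 hsubset
      rw [(hSdense k).closure_eq] at this
      exact this (mem_univ x)
    have h0 : |f (x * n) - f x| = 0 := by
      by_contra h
      have hpos : 0 < |f (x * n) - f x| := lt_of_le_of_ne (abs_nonneg _) (Ne.symm h)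
      obtain ⟨k, hk⟩ := exists_nat_one_div_lt hpos
      exact absurd (hbound k) (not_le.2 hk)
    have := abs_eq_zero.1 h0
    linarith
  -- the quotient group and its filter-basis topology
  set π : G →* G ⧸ N := QuotientGroup.mk' N with hπ_def
  have hπsur : Surjective π := QuotientGroup.mk'_surjective N
  have himg_mul : ∀ A B : Set G, π '' (A * B) = π '' A * π '' B := fun A B => Set.image_mul π
  set B : GroupFilterBasis (G ⧸ N) :=
    { sets := (fun V => π '' V) '' 𝒩
      nonempty := ⟨π '' univ, mem_image_of_mem _ h𝒩univ⟩
      inter_sets := by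
        rintro _ _ ⟨V, hV, rfl⟩ ⟨W, hW, rfl⟩
        exact ⟨π '' (V ∩ W), mem_image_of_mem _ (h𝒩inter V hV W hW),
          subset_inter (image_mono (f := π) inter_subset_left) (image_mono (f := π) inter_subset_right)⟩
      one' := by
        rintro _ ⟨V, hV, rfl⟩
        exact ⟨1, (h𝒩nbhd V hV).2.1, map_one π⟩
      mul' := by
        rintro _ ⟨V, hV, rfl⟩
        obtain ⟨W, hW𝒩, hWsq⟩ := h𝒩sq V hV
        refine ⟨π '' W, ⟨W, hW𝒩, rfl⟩, ?_⟩
        rw [← himg_mul]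
        exact image_mono (f := π) hWsq
      inv' := by
        rintro _ ⟨V, hV, rfl⟩
        refine ⟨π '' V, ⟨V, hV, rfl⟩, ?_⟩
        rintro _ ⟨v, hv, rfl⟩
        exact ⟨v⁻¹, (h𝒩nbhd V hV).inv_mem hv, map_inv π v⟩
      conj' := by
        intro x₀ UU hUU
        obtain ⟨V, hV, rfl⟩ := hUU
        obtain ⟨g, rfl⟩ := hπsur x₀
        obtain ⟨W, hW𝒩, hWconj⟩ := h𝒩conj V hV g
        refine ⟨π '' W, ⟨W, hW𝒩, rfl⟩, ?_⟩
        rintro _ ⟨n, hn, rfl⟩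
        refine ⟨g * n * g⁻¹, hWconj n hn, ?_⟩
        simp [map_mul, map_inv] } with hB_def
  letI tH : TopologicalSpace (G ⧸ N) := B.topology
  haveI htg : IsTopologicalGroup (G ⧸ N) := B.isTopologicalGroup
  have hmemB : ∀ V ∈ 𝒩, π '' V ∈ B := by
    rintro V hV
    exact ⟨V, hV, rfl⟩
  -- continuity of π
  have hπcont : Continuous ⇑π := by
    apply continuous_of_continuousAt_one π
    rw [ContinuousAt, map_one]
    rw [B.nhds_one_hasBasis.tendsto_right_iff]
    rintro _ ⟨V, hV, rfl⟩
    exact Filter.eventually_of_mem ((h𝒩nbhd V hV).1.mem_nhds (h𝒩nbhd V hV).2.1)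
      fun y hy => mem_image_of_mem _ hy
  -- points indistinguishable from 1 are 1
  have hsmall : ∀ a : G ⧸ N, (∀ V ∈ 𝒩, a ∈ π '' V) → a = 1 := by
    intro a ha
    obtain ⟨g, rfl⟩ := hπsur a
    have hgN : g ∈ N := by
      intro V hV
      obtain ⟨W, hW𝒩, hWsq⟩ := h𝒩sq V hV
      obtain ⟨w, hw, hwg⟩ := ha W hW𝒩
      obtain ⟨n, hnN, hwn⟩ := (QuotientGroup.mk'_eq_mk' N).1 hwg
      rw [← hwn]
      exact hWsq (Set.mul_mem_mul hw (hnN W hW𝒩))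
    exact (QuotientGroup.eq_one_iff g).2 hgN
  -- T1
  haveI ht1 : T1Space (G ⧸ N) := by
    apply IsTopologicalGroup.t1Space
    rw [← isOpen_compl_iff]
    rw [isOpen_iff_mem_nhds]
    intro a ha
    rw [mem_compl_iff, mem_singleton_iff] at ha
    have : ∃ V ∈ 𝒩, a ∉ π '' V := by
      by_contra h
      push_neg at h
      exact ha (hsmall a h)
    obtain ⟨V, hV, haV⟩ := this
    rw [(B.nhds_hasBasis a).mem_iff]
    refine ⟨π '' V, hmemB V hV, ?_⟩
    rintro _ ⟨_, ⟨v, hv, rfl⟩, rfl⟩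
    simp only [mem_compl_iff, mem_singleton_iff]
    intro h1
    apply haV
    have hav : a = π v⁻¹ := by
      rw [map_inv, eq_inv_iff_mul_eq_one]
      exact h1
    exact hav ▸ ⟨v⁻¹, (h𝒩nbhd V hV).inv_mem hv, rfl⟩
  -- first countability and metrizability
  haveI hcgen : (𝓝 (1 : G ⧸ N)).IsCountablyGenerated := by
    refine Filter.HasCountableBasis.isCountablyGenerated
      ⟨B.nhds_one_hasBasis, ?_⟩
    exact h𝒩cnt.image _
  letI uH : UniformSpace (G ⧸ N) := IsTopologicalGroup.rightUniformSpace (G ⧸ N)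
  haveI hu_cgen : (uniformity (G ⧸ N)).IsCountablyGenerated := by
    rw [uniformity_eq_comap_nhds_one' (G ⧸ N)]
    exact Filter.comap.isCountablyGenerated _ _
  haveI hmet : MetrizableSpace (G ⧸ N) := UniformSpace.metrizableSpace
  -- separability
  have hsepD : ∃ D : Set (G ⧸ N), D.Countable ∧ Dense D := by
    have hCV : ∀ V : Set G, ∃ C : Set G, C.Countable ∧
        (SNbhd V → ∀ x : G, ∃ c ∈ C, c⁻¹ * x ∈ V * V) := by
      intro V
      by_cases h : SNbhd V
      · obtain ⟨C, hCcnt, hC⟩ := narrow hWL h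
        exact ⟨C, hCcnt, fun _ => hC⟩
      · exact ⟨∅, countable_empty, fun h' => absurd h' h⟩
    choose C hCcnt hC using hCV
    refine ⟨π '' (⋃ V ∈ 𝒩, C V), (h𝒩cnt.biUnion fun V _ => hCcnt V).image _, ?_⟩
    rw [dense_iff_inter_open]
    intro O hOopen hOne
    obtain ⟨a, ha⟩ := hOne
    obtain ⟨_, ⟨V, hV𝒩, rfl⟩, hsub⟩ := (B.nhds_hasBasis a).mem_iff.1 (hOopen.mem_nhds ha)
    obtain ⟨W, hW𝒩, hWsq⟩ := h𝒩sq V hV𝒩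
    obtain ⟨x, rfl⟩ := hπsur a
    obtain ⟨c, hcC, hc⟩ := hC W (h𝒩nbhd W hW𝒩) x
    refine ⟨π c, ?_, mem_image_of_mem _ (mem_biUnion hW𝒩 hcC)⟩
    apply hsub
    refine ⟨π (x⁻¹ * c), ⟨x⁻¹ * c, ?_, rfl⟩, ?_⟩
    · apply hWsq
      have : x⁻¹ * c = (c⁻¹ * x)⁻¹ := by group
      rw [this, ← (h𝒩nbhd W hW𝒩).mul_inv (h𝒩nbhd W hW𝒩)]
      exact Set.inv_mem_inv.2 hc
    · show π x * π (x⁻¹ * c) = π c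
      rw [← map_mul]
      congr 1
      group
  obtain ⟨D, hDcnt, hDdense⟩ := hsepD
  haveI hsep : SeparableSpace (G ⧸ N) := ⟨⟨D, hDcnt, hDdense⟩⟩
  -- saturation
  have hsat : ⇑π ⁻¹' (⇑π '' (f ⁻¹' {x : ℝ | x ≠ 0})) = f ⁻¹' {x : ℝ | x ≠ 0} := by
    apply subset_antisymm
    · rintro x ⟨u, hu, hux⟩
      obtain ⟨n, hnN, hun⟩ := (QuotientGroup.mk'_eq_mk' N).1 hux
      rw [← hun]
      simp only [mem_preimage, mem_setOf_eq] at hu ⊢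
      rw [hper n hnN u]
      exact hu
    · exact subset_preimage_image _ _
  -- smallness
  haveI hsmallH : Small.{0} (G ⧸ N) := by
    letI mH : MetricSpace (G ⧸ N) := TopologicalSpace.metrizableSpaceMetric (G ⧸ N)
    obtain ⟨u, hu⟩ := TopologicalSpace.exists_dense_seq (G ⧸ N)
    refine small_of_injective (f := fun x (n : ℕ) => dist x (u n)) ?_
    intro x y hxy
    have hdxy : ∀ ε : ℝ, 0 < ε → dist x y < 2 * ε := by
      intro ε hε
      obtain ⟨n, hn⟩ := hu.exists_dist_lt x hε
      have h1 : dist y (u n) = dist x (u n) := by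
        have := congrFun hxy n
        simpa using this.symm
      calc dist x y ≤ dist x (u n) + dist (u n) y := dist_triangle _ _ _
        _ = dist x (u n) + dist y (u n) := by rw [dist_comm (u n) y]
        _ = dist x (u n) + dist x (u n) := by rw [h1]
        _ < ε + ε := by linarith
        _ = 2 * ε := by ring
    have : dist x y ≤ 0 := by
      by_contra h
      push_neg at h
      have := hdxy (dist x y / 4) (by linarith)
      linarith
    exact dist_le_zero.1 this
  -- transfer everything to a `Type 0` copy
  set μ : Shrink.{0} (G ⧸ N) ≃* (G ⧸ N) := Shrink.mulEquiv with hμ_def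
  letI t0 : TopologicalSpace (Shrink.{0} (G ⧸ N)) := tH.induced ⇑μ
  have hμcont : Continuous ⇑μ := continuous_induced_dom
  have hμsymmcont : Continuous ⇑μ.symm := by
    rw [continuous_induced_rng]
    have : ⇑μ ∘ ⇑μ.symm = id := by funext y; simp
    rw [this]; exact continuous_id
  have homeo : (G ⧸ N) ≃ₜ Shrink.{0} (G ⧸ N) :=
    { toEquiv := μ.toEquiv.symm
      continuous_toFun := hμsymmcont
      continuous_invFun := hμcont }
  haveI hcm0 : ContinuousMul (Shrink.{0} (G ⧸ N)) := by
    constructor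
    have heq : (fun p : Shrink.{0} (G ⧸ N) × Shrink.{0} (G ⧸ N) => p.1 * p.2)
        = fun p => μ.symm (μ p.1 * μ p.2) := by
      funext p
      rw [← map_mul, MulEquiv.symm_apply_apply]
    rw [heq]
    exact hμsymmcont.comp ((hμcont.comp continuous_fst).mul (hμcont.comp continuous_snd))
  haveI hci0 : ContinuousInv (Shrink.{0} (G ⧸ N)) := by
    constructor
    have heq : (fun a : Shrink.{0} (G ⧸ N) => a⁻¹) = fun a => μ.symm (μ a)⁻¹ := by
      funext a
      rw [← map_inv, MulEquiv.symm_apply_apply]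
    rw [heq]
    exact hμsymmcont.comp (hμcont.inv)
  haveI htg0 : IsTopologicalGroup (Shrink.{0} (G ⧸ N)) := ⟨⟩
  haveI hmet0 : MetrizableSpace (Shrink.{0} (G ⧸ N)) :=
    homeo.symm.isEmbedding.metrizableSpace
  haveI hsep0 : SeparableSpace (Shrink.{0} (G ⧸ N)) := by
    refine ⟨⟨⇑homeo '' D, hDcnt.image _, ?_⟩⟩
    rw [dense_iff_closure_eq, ← Homeomorph.image_closure, hDdense.closure_eq, Set.image_univ]
    exact homeo.surjective.range_eq
  set π0 : G →* Shrink.{0} (G ⧸ N) := μ.symm.toMonoidHom.comp π with hπ0_def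
  have hco : ⇑π0 = ⇑μ.symm ∘ ⇑π := rfl
  have hπ0cont : Continuous ⇑π0 := by rw [hco]; exact hμsymmcont.comp hπcont
  have hπ0sur : Surjective ⇑π0 := by rw [hco]; exact μ.symm.surjective.comp hπsur
  have hsat0 : ⇑π0 ⁻¹' (⇑π0 '' (f ⁻¹' {x : ℝ | x ≠ 0})) = f ⁻¹' {x : ℝ | x ≠ 0} := by
    rw [hco, Set.image_comp, Set.preimage_comp, Set.preimage_image_eq _ μ.symm.injective, hsat]
  exact ⟨Shrink.{0} (G ⧸ N), inferInstance, t0,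
    htg0, hsep0, hmet0, π0, hπ0cont, hπ0sur, hsat0⟩
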